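/- Let K, k, z be positive integers with K - k*z odd and K - k*z > 1. Then 1/(1 + ⌈2*k*z/(K - k*z + 1)⌉) + 2 * ∑_{r = (K-k*z+3)/2}^{K-k*z} 1/(1 + ⌈k*z/r⌉) ≤ (K - k*z)^2 / K. -/

import Mathlib

theorem stmt_1 (K k z : ℕ) (hK : 0 < K) (hk : 0 < k) (hz : 0 < z)
    (hlt : k * z < K) (hodd : Odd (K - k * z)) (h1 : 1 < K - k * z) :
    (1 : ℚ) / (1 + (⌈(2 * k * z : ℚ) / ((K : ℚ) - k * z + 1)⌉ : ℚ))
      + 2 * ∑ r ∈ Finset.Icc ((K - k * z + 3) / 2) (K - k * z),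
          (1 : ℚ) / (1 + (⌈(k * z : ℚ) / (r : ℚ)⌉ : ℚ))
      ≤ ((K - k * z : ℕ) : ℚ) ^ 2 / (K : ℚ) := by
  obtain ⟨j, hj⟩ := hodd
  set n := k * z with hn
  set m := K - n with hmdef
  have hn1 : 1 ≤ n := Nat.one_le_iff_ne_zero.mpr (Nat.mul_ne_zero hk.ne' hz.ne')
  have hm3 : 3 ≤ m := by omega
  have hKmn : K = n + m := by omega
  have hNq : (1:ℚ) ≤ (n:ℚ) := by exact_mod_cast hn1
  have hMq : (3:ℚ) ≤ (m:ℚ) := by exact_mod_cast hm3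
  have hKq : (K:ℚ) = (n:ℚ) + m := by exact_mod_cast congrArg (Nat.cast : ℕ → ℚ) hKmn
  have hKpos : (0:ℚ) < K := by exact_mod_cast hK
  have hnq : (k:ℚ) * z = (n:ℚ) := by push_cast [hn]; ring
  -- first term bound
  have hfb : (1 : ℚ) / (1 + (⌈(2 * k * z : ℚ) / ((K : ℚ) - k * z + 1)⌉ : ℚ))
      ≤ ((m:ℚ)+1) / ((m:ℚ)+1+2*n) := by
    have hd : (K : ℚ) - k * z + 1 = (m:ℚ) + 1 := by rw [hKq, ← hnq]; ring
    have hq : (2 * k * z : ℚ) / ((K : ℚ) - k * z + 1) = 2*(n:ℚ)/((m:ℚ)+1) := by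
      rw [hd, ← hnq]; ring
    have hdpos : (0:ℚ) < (m:ℚ) + 1 := by linarith
    have hq0 : (0:ℚ) < 1 + (2 * k * z : ℚ) / ((K : ℚ) - k * z + 1) := by
      rw [hq]; positivity
    have hceil := Int.le_ceil ((2 * k * z : ℚ) / ((K : ℚ) - k * z + 1))
    have step1 : (1 : ℚ) / (1 + (⌈(2 * k * z : ℚ) / ((K : ℚ) - k * z + 1)⌉ : ℚ))
        ≤ 1 / (1 + (2 * k * z : ℚ) / ((K : ℚ) - k * z + 1)) :=
      one_div_le_one_div_of_le hq0 (by linarith)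
    refine step1.trans ?_
    rw [hq]
    have h2 : (1:ℚ) + 2*(n:ℚ)/((m:ℚ)+1) = ((m:ℚ)+1+2*n)/((m:ℚ)+1) := by
      field_simp
    rw [h2, one_div_div]
  -- per-term bound in the sum
  have hterm : ∀ r ∈ Finset.Icc ((m + 3) / 2) m,
      (1 : ℚ) / (1 + (⌈(k * z : ℚ) / (r : ℚ)⌉ : ℚ)) ≤ (m : ℚ) / K := by
    intro r hr
    simp only [Finset.mem_Icc] at hr
    have hr1 : 1 ≤ r := by omega
    have hrq : (0:ℚ) < r := by exact_mod_cast hr1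
    have hrm : (r:ℚ) ≤ (m:ℚ) := by exact_mod_cast hr.2
    have hq0 : (0:ℚ) < 1 + (k * z : ℚ) / r := by
      have : (0:ℚ) ≤ (k * z : ℚ) / r := by positivity
      linarith
    have hceil := Int.le_ceil ((k * z : ℚ) / (r:ℚ))
    have step1 : (1 : ℚ) / (1 + (⌈(k * z : ℚ) / (r : ℚ)⌉ : ℚ))
        ≤ 1 / (1 + (k * z : ℚ) / r) :=
      one_div_le_one_div_of_le hq0 (by linarith)
    refine step1.trans ?_
    have h2 : (1:ℚ) + (k * z : ℚ) / r = ((r:ℚ)+n)/(r:ℚ) := by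
      rw [← hnq]; field_simp
    rw [h2, one_div_div, div_le_div_iff₀ (by linarith) hKpos, hKq]
    nlinarith [mul_nonneg (sub_nonneg.mpr hrm) (by linarith : (0:ℚ) ≤ (n:ℚ))]
  have hsum := Finset.sum_le_card_nsmul _ _ _ hterm
  have hcard : (Finset.Icc ((m + 3) / 2) m).card = j := by
    rw [Nat.card_Icc]; omega
  rw [hcard, nsmul_eq_mul] at hsum
  have hjq : (j:ℚ) = ((m:ℚ) - 1)/2 := by
    have : m = 2*j + 1 := by omega
    have : (m:ℚ) = 2*(j:ℚ) + 1 := by exact_mod_cast congrArg (Nat.cast : ℕ → ℚ) this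
    linarith
  -- combine
  have hfinal : ((m:ℚ)+1) / ((m:ℚ)+1+2*n) + 2 * ((j:ℚ) * ((m:ℚ)/K)) ≤ (m:ℚ)^2 / K := by
    rw [hjq, hKq]
    have hd1 : (0:ℚ) < (m:ℚ)+1+2*n := by linarith
    have hd2 : (0:ℚ) < (n:ℚ)+m := by linarith
    have key : ((m:ℚ)+1)/((m:ℚ)+1+2*n) ≤ (m:ℚ)/((n:ℚ)+m) := by
      rw [div_le_div_iff₀ hd1 hd2]
      nlinarith [mul_nonneg (by linarith : (0:ℚ) ≤ (m:ℚ)-1) (by linarith : (0:ℚ) ≤ (n:ℚ))]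
    have heq : (m:ℚ)/((n:ℚ)+m) + 2*(((m:ℚ)-1)/2 * ((m:ℚ)/((n:ℚ)+m))) = (m:ℚ)^2/((n:ℚ)+m) := by
      field_simp
      ring
    linarith
  calc (1 : ℚ) / (1 + (⌈(2 * k * z : ℚ) / ((K : ℚ) - k * z + 1)⌉ : ℚ))
      + 2 * ∑ r ∈ Finset.Icc ((m + 3) / 2) m,
          (1 : ℚ) / (1 + (⌈(k * z : ℚ) / (r : ℚ)⌉ : ℚ))
      ≤ ((m:ℚ)+1) / ((m:ℚ)+1+2*n) + 2 * ((j:ℚ) * ((m:ℚ)/K)) := by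
        have := hsum
        linarith
    _ ≤ (m:ℚ)^2 / K := hfinal
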